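/- arXiv:1612.01435 — 2 statements merged into one kernel-verified Lean document; each statement's English description precedes it below -/
import Mathlib

section
/- Let P be an irreflexive binary relation on ω. If there is a continuous homomorphism from the directed shift graph D_S to (ω,P), then there is a continuous homomorphism from D_S to the restriction of D_S to Unf(P). -/
/-- The space `[ω]^ω` of infinite subsets of `ω`, identified with their strictly
increasing enumerations, as a subspace of the Baire space `ℕ → ℕ`. -/
abbrev InfSub := {g : ℕ → ℕ // StrictMono g}

/-- The shift `S(X) = X ∖ {min X}`. -/
def shiftS (X : InfSub) : InfSub :=
  ⟨fun n => X.1 (n + 1), fun _ _ h => X.2 (Nat.succ_lt_succ h)⟩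

/-- Edge relation of the directed shift graph `D_S`. -/
def shiftEdge (X Y : InfSub) : Prop := X ≠ Y ∧ shiftS X = Y

/-- Edge relation of the symmetric shift graph `G_S`. -/
def shiftAdj (X Y : InfSub) : Prop := X ≠ Y ∧ (shiftS X = Y ∨ shiftS Y = X)

/-- `Unf(P)`: the set of `X` whose consecutive elements are `P`-related. -/
def UnfRel (P : ℕ → ℕ → Prop) : Set InfSub :=
  {X | ∀ i, P (X.1 i) (X.1 (i + 1))}

namespace GPaux

noncomputable section

/-- drop the first `k` values -/
def tl (k : ℕ) (X : InfSub) : InfSub :=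
  ⟨fun j => X.1 (j + k), fun a b hab => X.2 (by omega)⟩

lemma shift_tl (k : ℕ) (X : InfSub) : shiftS (tl k X) = tl (k + 1) X :=
  Subtype.ext (funext fun j => congrArg X.1 (by omega))

lemma tl_shift (k : ℕ) (X : InfSub) : tl k (shiftS X) = tl (k + 1) X :=
  Subtype.ext (funext fun j => congrArg X.1 (by omega))

def compI (N X : InfSub) : InfSub := ⟨fun j => N.1 (X.1 j), N.2.comp X.2⟩

lemma compI_shift (N X : InfSub) : compI N (shiftS X) = shiftS (compI N X) := rfl

lemma range_shift_sub (Z : InfSub) : Set.range (shiftS Z).1 ⊆ Set.range Z.1 := by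
  rintro v ⟨j, rfl⟩; exact ⟨j + 1, rfl⟩

lemma lt_of_mem_shift (Z : InfSub) {v : ℕ} (h : v ∈ Set.range (shiftS Z).1) : Z.1 0 < v := by
  obtain ⟨j, rfl⟩ := h; exact Z.2 (Nat.succ_pos j)

lemma getD_append_left (l l' : List ℕ) (i : ℕ) (h : i < l.length) :
    (l ++ l').getD i 0 = l.getD i 0 := by
  induction l generalizing i with
  | nil => simp at h
  | cons a l ih =>
    cases i with
    | zero => simp
    | succ i => simp only [List.cons_append, List.getD_cons_succ]; exact ih i (by simp at h; omega)

lemma getD_append_length (l : List ℕ) (a : ℕ) : (l ++ [a]).getD l.length 0 = a := by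
  induction l with
  | nil => simp
  | cons b l ih => simpa using ih

lemma chain'_append_singleton {l : List ℕ} {n : ℕ} (h : List.Chain' (· < ·) l)
    (hn : ∀ x ∈ l, x < n) : List.Chain' (· < ·) (l ++ [n]) := by
  rw [List.Chain', List.isChain_append]
  refine ⟨h, List.isChain_singleton n, ?_⟩
  intro x hx y hy
  simp only [List.head?_cons, Option.mem_def, Option.some.injEq] at hy
  subst hy
  exact hn x (List.mem_of_mem_getLast? hx)

variable (φ : InfSub → ℕ)

def Ext (s : List ℕ) (N X : InfSub) : Prop :=
  (∀ i, i < s.length → X.1 i = s.getD i 0) ∧ (∀ i, s.length ≤ i → X.1 i ∈ Set.range N.1)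

def Good (s : List ℕ) : Prop :=
  ∀ M : InfSub, (∀ x ∈ s, x < M.1 0) →
    ∃ N : InfSub, Set.range N.1 ⊆ Set.range M.1 ∧ ∃ b : Bool,
      ∀ X : InfSub, Ext s N X → (φ X < φ (shiftS X) ↔ b = true)

end
end GPaux

namespace GPaux
noncomputable section
variable (φ : InfSub → ℕ)

theorem good_step (s : List ℕ)
    (H : ∀ n, (∀ x ∈ s, x < n) → Good φ (s ++ [n])) : Good φ s := by
  intro M hM
  have hex : ∀ t : {N : InfSub // Set.range N.1 ⊆ Set.range M.1 ∧ ∀ x ∈ s, x < N.1 0},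
      ∃ N : InfSub, Set.range N.1 ⊆ Set.range (shiftS t.1).1 ∧ ∃ b : Bool,
        ∀ X : InfSub, Ext (s ++ [t.1.1 0]) N X → (φ X < φ (shiftS X) ↔ b = true) := by
    intro t
    refine H (t.1.1 0) t.2.2 (shiftS t.1) ?_
    intro x hx
    rcases List.mem_append.1 hx with hx | hx
    · exact lt_trans (t.2.2 x hx) (t.1.2 Nat.zero_lt_one)
    · simp only [List.mem_singleton] at hx
      subst hx
      exact t.1.2 Nat.zero_lt_one
  let step : {N : InfSub // Set.range N.1 ⊆ Set.range M.1 ∧ ∀ x ∈ s, x < N.1 0} →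
      {N : InfSub // Set.range N.1 ⊆ Set.range M.1 ∧ ∀ x ∈ s, x < N.1 0} := fun t =>
    ⟨Classical.choose (hex t),
      ((Classical.choose_spec (hex t)).1.trans ((range_shift_sub t.1).trans t.2.1)),
      fun x hx => lt_trans (t.2.2 x hx)
        (lt_of_mem_shift t.1 ((Classical.choose_spec (hex t)).1 ⟨0, rfl⟩))⟩
  let seq : ℕ → {N : InfSub // Set.range N.1 ⊆ Set.range M.1 ∧ ∀ x ∈ s, x < N.1 0} :=
    fun i => step^[i] ⟨M, subset_rfl, hM⟩
  have seq_succ : ∀ i, seq (i + 1) = step (seq i) := fun i =>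
    Function.iterate_succ_apply' step i _
  have spec : ∀ i, Set.range (seq (i + 1)).1.1 ⊆ Set.range (shiftS (seq i).1).1 ∧ ∃ b : Bool,
      ∀ X, Ext (s ++ [(seq i).1.1 0]) (seq (i + 1)).1 X → (φ X < φ (shiftS X) ↔ b = true) := by
    intro i
    have h1 : (seq (i + 1)).1 = Classical.choose (hex (seq i)) := by rw [seq_succ]
    rw [h1]
    exact Classical.choose_spec (hex (seq i))
  set ε : ℕ → Bool := fun i => Classical.choose (spec i).2 with hε
  have εspec : ∀ i, ∀ X, Ext (s ++ [(seq i).1.1 0]) (seq (i + 1)).1 X →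
      (φ X < φ (shiftS X) ↔ ε i = true) := fun i => Classical.choose_spec (spec i).2
  have chain : ∀ i j, i ≤ j → Set.range (seq j).1.1 ⊆ Set.range (seq i).1.1 := by
    intro i j hij
    induction j, hij using Nat.le_induction with
    | base => exact subset_rfl
    | succ j hj ih => exact ((spec j).1.trans (range_shift_sub _)).trans ih
  have nmono : StrictMono (fun i => (seq i).1.1 0) :=
    strictMono_nat_of_lt_succ (fun i => lt_of_mem_shift (seq i).1 ((spec i).1 ⟨0, rfl⟩))
  have sub_nn : ∀ i, (seq i).1.1 0 ∈ Set.range M.1 := fun i => (seq i).2.1 ⟨0, rfl⟩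
  have pig : ∃ b : Bool, {i | ε i = b}.Infinite := by
    by_contra hcon
    push_neg at hcon
    have h1 := hcon true
    have h2 := hcon false
    have huniv : (Set.univ : Set ℕ) ⊆ {i | ε i = true} ∪ {i | ε i = false} := by
      intro i _
      rcases Bool.eq_false_or_eq_true (ε i) with h | h
      · exact Or.inl h
      · exact Or.inr h
    exact Set.infinite_univ (Set.Finite.subset (h1.union h2) huniv)
  obtain ⟨b, hbI⟩ := pig
  have emono : StrictMono (Nat.nth (fun i => ε i = b)) := Nat.nth_strictMono hbI
  refine ⟨⟨fun k => (seq (Nat.nth (fun i => ε i = b) k)).1.1 0, nmono.comp emono⟩, ?_, b, ?_⟩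
  · rintro v ⟨k, rfl⟩; exact sub_nn _
  · intro X hX
    obtain ⟨k0, hk0⟩ := hX.2 s.length le_rfl
    have hj0p : ε (Nat.nth (fun i => ε i = b) k0) = b := Nat.nth_mem_of_infinite hbI k0
    set j0 := Nat.nth (fun i => ε i = b) k0 with hj0
    have hext : Ext (s ++ [(seq j0).1.1 0]) (seq (j0 + 1)).1 X := by
      constructor
      · intro i hi
        rw [List.length_append, List.length_singleton] at hi
        rcases Nat.lt_or_ge i s.length with hil | hil
        · rw [getD_append_left _ _ _ hil]
          exact hX.1 i hil
        · have hieq : i = s.length := by omega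
          subst hieq
          rw [getD_append_length]
          exact hk0.symm
      · intro i hi
        rw [List.length_append, List.length_singleton] at hi
        obtain ⟨k, hk⟩ := hX.2 i (by omega)
        have hlt : X.1 s.length < X.1 i := X.2 (by omega)
        rw [← hk0, ← hk] at hlt
        have hj : j0 < Nat.nth (fun i => ε i = b) k := nmono.lt_iff_lt.1 hlt
        have hmem : (seq (Nat.nth (fun i => ε i = b) k)).1.1 0 ∈
            Set.range (seq (Nat.nth (fun i => ε i = b) k)).1.1 := ⟨0, rfl⟩
        have := chain (j0 + 1) _ (by omega) hmem
        rwa [hk] at this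
    rw [εspec j0 X hext, hj0p]

theorem loc_const (hφc : Continuous φ) (X : InfSub) :
    ∃ n : ℕ, ∀ Y : InfSub, (∀ i ≤ n, Y.1 i = X.1 i) →
      φ Y = φ X ∧ φ (shiftS Y) = φ (shiftS X) := by
  have hS : Continuous (shiftS) := by
    apply Continuous.subtype_mk
    apply continuous_pi
    intro i
    exact (continuous_apply (i + 1)).comp continuous_subtype_val
  have hU : IsOpen ((fun Y => φ Y) ⁻¹' {φ X} ∩
      (fun Y => φ (shiftS Y)) ⁻¹' {φ (shiftS X)} : Set InfSub) :=
    IsOpen.inter (hφc.isOpen_preimage _ (isOpen_discrete _))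
      ((hφc.comp hS).isOpen_preimage _ (isOpen_discrete _))
  have hXU : X ∈ ((fun Y => φ Y) ⁻¹' {φ X} ∩
      (fun Y => φ (shiftS Y)) ⁻¹' {φ (shiftS X)} : Set InfSub) := ⟨rfl, rfl⟩
  have hnhds := hU.mem_nhds hXU
  rw [nhds_induced Subtype.val X] at hnhds
  obtain ⟨V, hV, hVsub⟩ := Filter.mem_comap.1 hnhds
  rw [nhds_pi] at hV
  obtain ⟨I, hIfin, t, ht, hIsub⟩ := Filter.mem_pi.1 hV
  obtain ⟨n, hnb⟩ := hIfin.bddAbove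
  refine ⟨n, ?_⟩
  intro Y hY
  have hmem : Y.1 ∈ Set.pi I t := by
    intro i hi
    rw [hY i (hnb hi)]
    have h1 := ht i
    rw [nhds_discrete, Filter.mem_pure] at h1
    exact h1
  have := hVsub (hIsub hmem)
  exact ⟨this.1, this.2⟩

theorem good_of_chain (hφc : Continuous φ) :
    ∀ s : List ℕ, List.Chain' (· < ·) s → Good φ s := by
  by_contra hcon
  push_neg at hcon
  obtain ⟨s0, hs0c, hs0⟩ := hcon
  have hex : ∀ t : {s : List ℕ // List.Chain' (· < ·) s ∧ ¬ Good φ s},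
      ∃ n, (∀ x ∈ t.1, x < n) ∧ ¬ Good φ (t.1 ++ [n]) := by
    intro t
    by_contra hh
    push_neg at hh
    exact t.2.2 (good_step φ t.1 hh)
  let stepB : {s : List ℕ // List.Chain' (· < ·) s ∧ ¬ Good φ s} →
      {s : List ℕ // List.Chain' (· < ·) s ∧ ¬ Good φ s} := fun t =>
    ⟨t.1 ++ [Classical.choose (hex t)],
      chain'_append_singleton t.2.1 (Classical.choose_spec (hex t)).1,
      (Classical.choose_spec (hex t)).2⟩
  let seqB : ℕ → {s : List ℕ // List.Chain' (· < ·) s ∧ ¬ Good φ s} :=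
    fun i => stepB^[i] ⟨s0, hs0c, hs0⟩
  have seqB_succ : ∀ i, ∃ n, (seqB (i + 1)).1 = (seqB i).1 ++ [n] := by
    intro i
    refine ⟨Classical.choose (hex (seqB i)), ?_⟩
    show (stepB^[i + 1] _).1 = _
    rw [Function.iterate_succ_apply']
  have lenB : ∀ i, (seqB i).1.length = s0.length + i := by
    intro i
    induction i with
    | zero => rfl
    | succ i ih =>
      obtain ⟨n, hn⟩ := seqB_succ i
      rw [hn, List.length_append, List.length_singleton, ih]
      omega
  have prefixB : ∀ i j, i ≤ j → (seqB i).1 <+: (seqB j).1 := by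
    intro i j hij
    induction j, hij using Nat.le_induction with
    | base => exact List.prefix_rfl
    | succ j hj ih =>
      obtain ⟨n, hn⟩ := seqB_succ j
      exact ih.trans (hn ▸ ⟨[n], rfl⟩)
  have gconsist : ∀ j k, k < (seqB j).1.length →
      (seqB j).1.getD k 0 = (seqB (k + 1)).1.getD k 0 := by
    intro j k hk
    rcases le_total j (k + 1) with hle | hle
    · obtain ⟨u, hu⟩ := prefixB j (k + 1) hle
      rw [← hu, getD_append_left _ _ _ hk]
    · obtain ⟨u, hu⟩ := prefixB (k + 1) j hle
      have hk2 : k < (seqB (k + 1)).1.length := by rw [lenB]; omega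
      rw [← hu, getD_append_left _ _ _ hk2]
  have gmono : StrictMono (fun k => (seqB (k + 1)).1.getD k 0) := by
    apply strictMono_nat_of_lt_succ
    intro k
    have hk1 : k < (seqB (k + 2)).1.length := by rw [lenB]; omega
    have hk2 : k + 1 < (seqB (k + 2)).1.length := by rw [lenB]; omega
    have h1 := gconsist (k + 2) k hk1
    show (seqB (k + 1)).1.getD k 0 < (seqB (k + 1 + 1)).1.getD (k + 1) 0
    rw [← h1, List.getD_eq_getElem _ _ hk1, List.getD_eq_getElem _ _ hk2]
    have hp : List.Pairwise (· < ·) (seqB (k + 2)).1 :=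
      List.isChain_iff_pairwise.1 (seqB (k + 2)).2.1
    exact List.pairwise_iff_getElem.1 hp k (k + 1) hk1 hk2 (by omega)
  set X : InfSub := ⟨fun k => (seqB (k + 1)).1.getD k 0, gmono⟩ with hX
  obtain ⟨n, hn⟩ := loc_const φ hφc X
  have hgood : Good φ (seqB (n + 1)).1 := by
    intro M hM
    refine ⟨M, subset_rfl, decide (φ X < φ (shiftS X)), ?_⟩
    intro Y hY
    have hagree : ∀ i ≤ n, Y.1 i = X.1 i := by
      intro i hi
      have hilen : i < (seqB (n + 1)).1.length := by rw [lenB]; omega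
      have hcc := gconsist (n + 1) i hilen
      rw [hY.1 i hilen, hcc]
    obtain ⟨e1, e2⟩ := hn Y hagree
    rw [e1, e2]
    simp [decide_eq_true_iff]
  exact (seqB (n + 1)).2.2 hgood
end
end GPaux

/-- for irreflexive `P`, a continuous homomorphism from `D_S` to
`(ω, P)` yields a continuous homomorphism from `D_S` to `D_S ↾ Unf(P)`. -/
theorem continuous_hom_to_unf (P : ℕ → ℕ → Prop) (hP : Irreflexive P)
    (h : ∃ φ : InfSub → ℕ, Continuous φ ∧ ∀ X : InfSub, P (φ X) (φ (shiftS X))) :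
    ∃ Φ : InfSub → InfSub, Continuous Φ ∧ (∀ X : InfSub, Φ X ∈ UnfRel P) ∧
      ∀ X Y : InfSub, shiftEdge X Y → shiftEdge (Φ X) (Φ Y) := by
  obtain ⟨φ, hφc, hφP⟩ := h
  have hne : ∀ X : InfSub, φ X ≠ φ (shiftS X) := by
    intro X he
    exact hP (φ X) (he ▸ hφP X)
  obtain ⟨N, -, b, hb⟩ := GPaux.good_of_chain φ hφc [] List.isChain_nil
    ⟨id, strictMono_id⟩ (by simp)
  have hbext : ∀ X : InfSub, (∀ i, X.1 i ∈ Set.range N.1) →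
      (φ X < φ (shiftS X) ↔ b = true) := by
    intro X hX
    exact hb X ⟨fun i hi => by simp at hi, fun i _ => hX i⟩
  have hbtrue : b = true := by
    by_contra hbf
    have hdesc : ∀ k, φ (GPaux.tl (k + 1) N) < φ (GPaux.tl k N) := by
      intro k
      have hmem : ∀ i, (GPaux.tl k N).1 i ∈ Set.range N.1 := fun i => ⟨i + k, rfl⟩
      have h1 := hbext _ hmem
      have h2 : ¬ (φ (GPaux.tl k N) < φ (shiftS (GPaux.tl k N))) := fun hlt => hbf (h1.1 hlt)
      have h3 := hne (GPaux.tl k N)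
      rw [GPaux.shift_tl] at h2 h3
      omega
    have hbound : ∀ k, φ (GPaux.tl k N) + k ≤ φ (GPaux.tl 0 N) := by
      intro k
      induction k with
      | zero => omega
      | succ k ih => have := hdesc k; omega
    have := hbound (φ (GPaux.tl 0 N) + 1)
    omega
  have key : ∀ X : InfSub, (∀ i, X.1 i ∈ Set.range N.1) → φ X < φ (shiftS X) := by
    intro X hX
    exact (hbext X hX).2 hbtrue
  have keymono : ∀ X : InfSub, StrictMono (fun i => φ (GPaux.tl i (GPaux.compI N X))) := by
    intro X
    apply strictMono_nat_of_lt_succ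
    intro i
    have := key (GPaux.tl i (GPaux.compI N X)) (fun j => ⟨X.1 (j + i), rfl⟩)
    rwa [GPaux.shift_tl] at this
  refine ⟨fun X => ⟨fun i => φ (GPaux.tl i (GPaux.compI N X)), keymono X⟩, ?_, ?_, ?_⟩
  · apply Continuous.subtype_mk
    apply continuous_pi
    intro i
    have hin : Continuous (fun X : InfSub => GPaux.tl i (GPaux.compI N X)) := by
      apply Continuous.subtype_mk
      apply continuous_pi
      intro j
      exact (continuous_of_discreteTopology (f := N.1)).comp
        ((continuous_apply (j + i)).comp continuous_subtype_val)
    exact hφc.comp hin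
  · intro X i
    show P (φ (GPaux.tl i (GPaux.compI N X))) (φ (GPaux.tl (i + 1) (GPaux.compI N X)))
    rw [← GPaux.shift_tl]
    exact hφP _
  · rintro X Y ⟨hXY, hSX⟩
    subst hSX
    have hc : (⟨fun i => φ (GPaux.tl i (GPaux.compI N (shiftS X))), keymono _⟩ : InfSub) =
        shiftS ⟨fun i => φ (GPaux.tl i (GPaux.compI N X)), keymono X⟩ := by
      apply Subtype.ext
      funext i
      show φ (GPaux.tl i (GPaux.compI N (shiftS X))) = φ (GPaux.tl (i + 1) (GPaux.compI N X))
      rw [GPaux.compI_shift, GPaux.tl_shift]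
    refine ⟨?_, hc.symm⟩
    intro he
    have he2 : (⟨fun i => φ (GPaux.tl i (GPaux.compI N X)), keymono X⟩ : InfSub) =
        shiftS ⟨fun i => φ (GPaux.tl i (GPaux.compI N X)), keymono X⟩ := he.trans hc
    have h0 := congrArg (fun Z : InfSub => Z.1 0) he2
    simp only at h0
    exact absurd h0 (ne_of_lt (keymono X Nat.zero_lt_one))
end

section
/- Let P be an irreflexive binary relation on ω. The following are equivalent: (1) there exists a continuous homomorphism from D_S to (ω,P); (2) there exists a continuous homomorphism from D_S to D_S restricted to Unf(P). -/
namespace GPaux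

/-- `X` fits `(s, A)` : its first `s.length` values are given by `s` and its
remaining values lie in `A`. -/
def Fits (s : List ℕ) (A : Set ℕ) (X : InfSub) : Prop :=
  (∀ (i : ℕ) (h : i < s.length), X.1 i = s[i]) ∧ ∀ i, s.length ≤ i → X.1 i ∈ A

def Accepts (c : InfSub → Bool) (A : Set ℕ) (s : List ℕ) : Prop :=
  ∀ X, Fits s A X → c X = true

def Rejects (c : InfSub → Bool) (A : Set ℕ) (s : List ℕ) : Prop :=
  ∀ B, B ⊆ A → B.Infinite → ¬ Accepts c B s

lemma Accepts.mono {c : InfSub → Bool} {A B : Set ℕ} {s : List ℕ}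
    (hBA : B ⊆ A) (h : Accepts c A s) : Accepts c B s :=
  fun X hX => h X ⟨hX.1, fun i hi => hBA (hX.2 i hi)⟩

lemma Rejects.mono {c : InfSub → Bool} {A B : Set ℕ} {s : List ℕ}
    (hBA : B ⊆ A) (h : Rejects c A s) : Rejects c B s :=
  fun C hC hCi => h C (hC.trans hBA) hCi

lemma exists_decide (c : InfSub → Bool) (A : Set ℕ) (hA : A.Infinite) (s : List ℕ) :
    ∃ B, B ⊆ A ∧ B.Infinite ∧ (Accepts c B s ∨ Rejects c B s) := by
  by_cases h : Rejects c A s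
  · exact ⟨A, subset_rfl, hA, Or.inr h⟩
  · unfold Rejects at h
    push_neg at h
    obtain ⟨B, hBA, hBi, hBacc⟩ := h
    exact ⟨B, hBA, hBi, Or.inl hBacc⟩

lemma exists_decideList (c : InfSub → Bool) (ts : List (List ℕ)) (A : Set ℕ)
    (hA : A.Infinite) :
    ∃ B, B ⊆ A ∧ B.Infinite ∧ ∀ t ∈ ts, Accepts c B t ∨ Rejects c B t := by
  induction ts with
  | nil => exact ⟨A, subset_rfl, hA, by simp⟩
  | cons t ts ih =>
    obtain ⟨B, hBA, hBi, hB⟩ := ih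
    obtain ⟨C, hCB, hCi, hC⟩ := exists_decide c B hBi t
    refine ⟨C, hCB.trans hBA, hCi, ?_⟩
    intro u hu
    rcases List.mem_cons.mp hu with rfl | hu
    · exact hC
    · rcases hB u hu with h | h
      · exact Or.inl (h.mono hCB)
      · exact Or.inr (h.mono hCB)

end GPaux


namespace GPaux

structure InnerSt (c : InfSub → Bool) (A : Set ℕ) (S : List (List ℕ)) where
  a : ℕ
  B : Set ℕ
  hBi : B.Infinite
  hBA : B ⊆ A
  hBa : B ⊆ Set.Ioi a
  haA : a ∈ A
  hdec : ∀ s ∈ S, Accepts c B (s ++ [a]) ∨ Rejects c B (s ++ [a])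

lemma inner_init (c : InfSub → Bool) (A : Set ℕ) (S : List (List ℕ)) (hA : A.Infinite) :
    Nonempty (InnerSt c A S) := by
  obtain ⟨a, haA⟩ := hA.nonempty
  have hAi : (A \ Set.Iic a).Infinite := hA.diff (Set.finite_Iic a)
  obtain ⟨B, hBA, hBi, hB⟩ := exists_decideList c (S.map (· ++ [a])) (A \ Set.Iic a) hAi
  exact ⟨⟨a, B, hBi, fun x hx => (hBA hx).1, fun x hx => Set.mem_Ioi.mpr (not_le.mp (hBA hx).2), haA,
    fun s hs => hB (s ++ [a]) (List.mem_map_of_mem hs)⟩⟩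

lemma inner_step (c : InfSub → Bool) (A : Set ℕ) (S : List (List ℕ)) (q : InnerSt c A S) :
    ∃ q' : InnerSt c A S, q'.B ⊆ q.B ∧ q'.a ∈ q.B := by
  obtain ⟨a, haB⟩ := q.hBi.nonempty
  have hAi : (q.B \ Set.Iic a).Infinite := q.hBi.diff (Set.finite_Iic a)
  obtain ⟨B, hBA, hBi, hB⟩ := exists_decideList c (S.map (· ++ [a])) _ hAi
  exact ⟨⟨a, B, hBi, fun x hx => q.hBA (hBA hx).1, fun x hx => Set.mem_Ioi.mpr (not_le.mp (hBA hx).2),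
    q.hBA haB, fun s hs => hB (s ++ [a]) (List.mem_map_of_mem hs)⟩,
    fun x hx => (hBA hx).1, haB⟩

noncomputable def innerF (c : InfSub → Bool) (A : Set ℕ) (S : List (List ℕ))
    (q : InnerSt c A S) : InnerSt c A S :=
  (inner_step c A S q).choose

lemma innerF_spec (c : InfSub → Bool) (A : Set ℕ) (S : List (List ℕ)) (q : InnerSt c A S) :
    (innerF c A S q).B ⊆ q.B ∧ (innerF c A S q).a ∈ q.B :=
  (inner_step c A S q).choose_spec

lemma step_lemma (c : InfSub → Bool) (A : Set ℕ) (hA : A.Infinite) (S : List (List ℕ))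
    (hrej : ∀ s ∈ S, Rejects c A s) :
    ∃ a ∈ A, ∃ B, B ⊆ A ∧ B.Infinite ∧ B ⊆ Set.Ioi a ∧
      ∀ s ∈ S, Rejects c B (s ++ [a]) := by
  classical
  obtain ⟨q0⟩ := inner_init c A S hA
  set seq : ℕ → InnerSt c A S := fun n => (innerF c A S)^[n] q0 with hseq
  have hstep : ∀ n, (seq (n+1)).B ⊆ (seq n).B ∧ (seq (n+1)).a ∈ (seq n).B := by
    intro n
    have h1 : seq (n+1) = innerF c A S (seq n) := Function.iterate_succ_apply' _ n q0
    rw [h1]; exact innerF_spec c A S (seq n)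
  have hmono : ∀ m n, m ≤ n → (seq n).B ⊆ (seq m).B := by
    intro m n h
    induction n, h using Nat.le_induction with
    | base => exact subset_rfl
    | succ n hmn ih => exact ((hstep n).1).trans ih
  have hamono : StrictMono fun n => (seq n).a :=
    strictMono_nat_of_lt_succ fun n => (seq n).hBa ((hstep n).2)
  have hmem : ∀ k j, k < j → (seq j).a ∈ (seq k).B := by
    intro k j h
    rcases Nat.exists_eq_add_of_lt h with ⟨j', rfl⟩
    exact hmono k (k + j') (Nat.le_add_right _ _) (hstep (k + j')).2
  by_cases hcase : ∃ k, ∀ s ∈ S, Rejects c (seq k).B (s ++ [(seq k).a])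
  · obtain ⟨k, hk⟩ := hcase
    exact ⟨(seq k).a, (seq k).haA, (seq k).B, (seq k).hBA, (seq k).hBi, (seq k).hBa, hk⟩
  · exfalso
    push_neg at hcase
    choose s hsS hsnr using hcase
    have hacc : ∀ k, Accepts c (seq k).B (s k ++ [(seq k).a]) := fun k =>
      ((seq k).hdec (s k) (hsS k)).resolve_right (hsnr k)
    -- pigeonhole
    obtain ⟨t, htS, hK⟩ : ∃ t, t ∈ S ∧ {k | s k = t}.Infinite := by
      set f : ℕ → {u // u ∈ S.toFinset} := fun k => ⟨s k, List.mem_toFinset.mpr (hsS k)⟩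
      obtain ⟨y, hy⟩ := Finite.exists_infinite_fiber f
      refine ⟨y.1, List.mem_toFinset.mp y.2, ?_⟩
      refine (Set.infinite_coe_iff.mp hy).mono ?_
      intro k hk
      have : f k = y := hk
      simpa [f, Subtype.ext_iff] using this
    set K := {k | s k = t} with hKdef
    set C := (fun k => (seq k).a) '' K with hCdef
    have hCA : C ⊆ A := by rintro x ⟨k, _, rfl⟩; exact (seq k).haA
    have hCinf : C.Infinite := hK.image (hamono.injective.injOn)
    refine hrej t htS C hCA hCinf ?_
    intro X hX
    obtain ⟨k, hkK, hka⟩ : ∃ k, k ∈ K ∧ (seq k).a = X.1 t.length := hX.2 t.length le_rfl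
    have hkt : s k = t := hkK
    have hacck : Accepts c (seq k).B (t ++ [(seq k).a]) := hkt ▸ hacc k
    refine hacck X ⟨?_, ?_⟩
    · intro i hi
      have hlen : (t ++ [(seq k).a]).length = t.length + 1 := by simp
      rcases Nat.lt_or_ge i t.length with hlt | hge
      · rw [List.getElem_append_left hlt]
        exact hX.1 i hlt
      · have hieq : i = t.length := by omega
        subst hieq
        rw [List.getElem_concat_length rfl]
        exact hka.symm
    · intro i hi
      simp only [List.length_append, List.length_cons, List.length_nil] at hi
      have hiC : X.1 i ∈ C := hX.2 i (by omega)
      obtain ⟨j, hjK, hja⟩ := hiC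
      simp only at hja
      have hgt : (seq k).a < (seq j).a := by
        rw [hka, hja]
        exact X.2 (by omega)
      rw [← hja]
      exact hmem k j (hamono.lt_iff_lt.mp hgt)

end GPaux

namespace GPaux

/-- A strictly increasing list whose elements all lie in a strictly increasing
list `L` is a sublist of `L`. -/
lemma sublist_of_pairwise_mem : ∀ (L s : List ℕ), L.Pairwise (· < ·) → s.Pairwise (· < ·) →
    (∀ x ∈ s, x ∈ L) → s.Sublist L := by
  intro L
  induction L with
  | nil =>
    intro s _ _ hmem
    cases s with
    | nil => exact List.Sublist.refl _
    | cons x s' => exact absurd (hmem x (by simp)) (by simp)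
  | cons b L ih =>
    intro s hL hs hmem
    cases s with
    | nil => exact List.nil_sublist _
    | cons x s' =>
      have hLp := List.pairwise_cons.mp hL
      have hsp := List.pairwise_cons.mp hs
      by_cases hxb : x = b
      · subst hxb
        refine List.Sublist.cons₂ _ (ih s' hLp.2 hsp.2 ?_)
        intro y hy
        have hxy : x < y := hsp.1 y hy
        rcases List.mem_cons.mp (hmem y (List.mem_cons_of_mem _ hy)) with rfl | h
        · exact absurd hxy (lt_irrefl _)
        · exact h
      · refine List.Sublist.cons _ (ih (x :: s') hLp.2 hs ?_)
        intro y hy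
        have hxL : x ∈ L := by
          rcases List.mem_cons.mp (hmem x (by simp)) with rfl | h
          · exact absurd rfl hxb
          · exact h
        have hbx : b < x := hLp.1 x hxL
        rcases List.mem_cons.mp (hmem y hy) with rfl | h
        · exfalso
          rcases List.mem_cons.mp hy with rfl | h'
          · exact hxb rfl
          · exact absurd (hsp.1 y h') (by omega)
        · exact h

structure OuterSt (c : InfSub → Bool) where
  L : List ℕ
  A : Set ℕ
  hAi : A.Infinite
  hL : L.Pairwise (· < ·)
  hLA : ∀ x ∈ L, ∀ y ∈ A, x < y
  hrej : ∀ s, s.Sublist L → Rejects c A s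

lemma outer_step (c : InfSub → Bool) (q : OuterSt c) :
    ∃ q' : OuterSt c, ∃ a, a ∈ q.A ∧ q'.L = q.L ++ [a] ∧ q'.A ⊆ q.A := by
  obtain ⟨a, haA, B, hBA, hBi, hBa, hBrej⟩ :=
    step_lemma c q.A q.hAi q.L.sublists (fun s hs => q.hrej s (List.mem_sublists.mp hs))
  have hL' : (q.L ++ [a]).Pairwise (· < ·) := by
    rw [List.pairwise_append]
    refine ⟨q.hL, by simp, ?_⟩
    intro x hx y hy
    rw [List.mem_singleton] at hy
    rw [hy]
    exact q.hLA x hx a haA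
  have hLA' : ∀ x ∈ q.L ++ [a], ∀ y ∈ B, x < y := by
    intro x hx y hy
    rcases List.mem_append.mp hx with h | h
    · exact q.hLA x h y (hBA hy)
    · rw [List.mem_singleton] at h
      subst h
      exact hBa hy
  have hrej' : ∀ s, s.Sublist (q.L ++ [a]) → Rejects c B s := by
    intro s hsub
    have : s ∈ (q.L ++ [a]).sublists := List.mem_sublists.mpr hsub
    rw [List.sublists_concat] at this
    rcases List.mem_append.mp this with h | h
    · exact (q.hrej s (List.mem_sublists.mp h)).mono hBA
    · obtain ⟨s', hs', rfl⟩ := List.mem_map.mp h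
      exact hBrej s' hs'
  exact ⟨⟨q.L ++ [a], B, hBi, hL', hLA', hrej'⟩, a, haA, rfl, hBA⟩

noncomputable def outerF (c : InfSub → Bool) (q : OuterSt c) : OuterSt c :=
  (outer_step c q).choose

lemma outerF_spec (c : InfSub → Bool) (q : OuterSt c) :
    ∃ a, a ∈ q.A ∧ (outerF c q).L = q.L ++ [a] ∧ (outerF c q).A ⊆ q.A :=
  (outer_step c q).choose_spec

/-- Galvin's theorem for continuous (literally: "determined by finite prefixes")
colorings of `[ω]^ω`. -/
theorem galvin (c : InfSub → Bool)
    (hc : ∀ X : InfSub, ∃ m, ∀ Y : InfSub, (∀ i, i < m → Y.1 i = X.1 i) → c Y = c X) :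
    ∃ h : ℕ → ℕ, StrictMono h ∧
      ((∀ X : InfSub, (∀ i, X.1 i ∈ Set.range h) → c X = true) ∨
       (∀ X : InfSub, (∀ i, X.1 i ∈ Set.range h) → c X = false)) := by
  by_cases h0 : Rejects c Set.univ []
  · -- fusion: produce a set all of whose infinite subsets get color `false`
    set q0 : OuterSt c := ⟨[], Set.univ, Set.infinite_univ, by simp, by simp,
      fun s hs => by rw [List.sublist_nil.mp hs]; exact h0⟩ with hq0
    set oseq : ℕ → OuterSt c := fun n => (outerF c)^[n] q0 with hoseq
    have hstep : ∀ n, ∃ a, a ∈ (oseq n).A ∧ (oseq (n+1)).L = (oseq n).L ++ [a] ∧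
        (oseq (n+1)).A ⊆ (oseq n).A := by
      intro n
      have h1 : oseq (n+1) = outerF c (oseq n) := Function.iterate_succ_apply' _ n q0
      rw [h1]; exact outerF_spec c (oseq n)
    choose a haA hLstep hAstep using hstep
    have hAmono : ∀ m n, m ≤ n → (oseq n).A ⊆ (oseq m).A := by
      intro m n h
      induction n, h using Nat.le_induction with
      | base => exact subset_rfl
      | succ n hmn ih => exact (hAstep n).trans ih
    have hmemL : ∀ m n, m < n → a m ∈ (oseq n).L := by
      intro m n h
      induction n, h using Nat.le_induction with
      | base => rw [hLstep m]; simp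
      | succ n hmn ih => rw [hLstep n]; exact List.mem_append_left _ ih
    have hamono : StrictMono a := by
      apply strictMono_nat_of_lt_succ
      intro n
      exact (oseq (n+1)).hLA (a n) (hmemL n (n+1) (Nat.lt_succ_self n)) (a (n+1)) (haA (n+1))
    refine ⟨a, hamono, Or.inr ?_⟩
    intro X hX
    by_contra hcX
    rw [Bool.not_eq_false] at hcX
    choose g hg using hX
    have hgmono : StrictMono g := by
      intro i j hij
      exact hamono.lt_iff_lt.mp (by rw [hg i, hg j]; exact X.2 hij)
    obtain ⟨m, hm⟩ := hc X
    set s : List ℕ := (List.range m).map X.1 with hsdef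
    set N := g m with hNdef
    set A' := X.1 '' Set.Ici m with hA'def
    have hslen : s.length = m := by simp [hsdef]
    have hspair : s.Pairwise (· < ·) :=
      (List.pairwise_lt_range (n := m)).map X.1 (fun _ _ hab => X.2 hab)
    have hsmem : ∀ x ∈ s, x ∈ (oseq N).L := by
      intro x hx
      obtain ⟨i, hi, rfl⟩ := List.mem_map.mp hx
      rw [List.mem_range] at hi
      rw [← hg i]
      exact hmemL (g i) N (hgmono hi)
    have hsub : s.Sublist (oseq N).L :=
      sublist_of_pairwise_mem _ _ (oseq N).hL hspair hsmem
    have hA'A : A' ⊆ (oseq N).A := by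
      rintro x ⟨i, hi, rfl⟩
      rw [Set.mem_Ici] at hi
      rw [← hg i]
      exact hAmono N (g i) (hgmono.monotone hi) (haA (g i))
    have hA'inf : A'.Infinite := (Set.Ici_infinite m).image (X.2.injective.injOn)
    refine (oseq N).hrej s hsub A' hA'A hA'inf ?_
    intro Y hY
    have hpre : ∀ i, i < m → Y.1 i = X.1 i := by
      intro i hi
      have := hY.1 i (by omega)
      rw [this]
      simp [hsdef]
    rw [hm Y hpre, hcX]
  · -- some infinite set accepts `[]`: all its subsets get color `true`
    unfold Rejects at h0
    push_neg at h0
    obtain ⟨B, _, hBi, hBacc⟩ := h0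
    have hBi' : {x | x ∈ B}.Infinite := hBi
    refine ⟨Nat.nth (· ∈ B), Nat.nth_strictMono hBi', Or.inl ?_⟩
    intro X hX
    refine hBacc X ⟨fun i hi => by simp at hi, fun i _ => ?_⟩
    obtain ⟨j, hj⟩ := hX i
    rw [← hj]
    exact Nat.nth_mem_of_infinite hBi' j

end GPaux

namespace GPaux

lemma no_descent (f : ℕ → ℕ) (h : ∀ n, f (n + 1) < f n) : False := by
  have key : ∀ n, f n + n ≤ f 0 := by
    intro n
    induction n with
    | zero => simp
    | succ n ih => have := h n; omega
  have := key (f 0 + 1)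
  omega

lemma continuous_modulus {ρ : InfSub → ℕ} (h : Continuous ρ) (X : InfSub) :
    ∃ m, ∀ Y : InfSub, (∀ i, i < m → Y.1 i = X.1 i) → ρ Y = ρ X := by
  have hU : IsOpen (ρ ⁻¹' {ρ X}) := h.isOpen_preimage _ (isOpen_discrete _)
  rw [isOpen_induced_iff] at hU
  obtain ⟨V, hV, hVU⟩ := hU
  have hXV : X.1 ∈ V := by
    have : X ∈ Subtype.val ⁻¹' V := by rw [hVU]; exact rfl
    exact this
  obtain ⟨I, u, hu, hIu⟩ := isOpen_pi_iff.mp hV X.1 hXV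
  refine ⟨I.sup id + 1, fun Y hY => ?_⟩
  have hYV : Y.1 ∈ (I : Set ℕ).pi u := by
    intro i hi
    have hlt : i < I.sup id + 1 := Nat.lt_succ_of_le (Finset.le_sup (f := id) hi)
    rw [hY i hlt]
    exact (hu i hi).2
  have hmem : Y ∈ Subtype.val ⁻¹' V := hIu hYV
  rw [hVU] at hmem
  exact hmem

lemma continuous_shiftS : Continuous shiftS := by
  have hc : Continuous fun X : InfSub => (fun n => X.1 (n + 1) : ℕ → ℕ) :=
    continuous_pi fun i => (continuous_apply (i + 1)).comp continuous_subtype_val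
  unfold shiftS
  exact hc.subtype_mk _

lemma continuous_shiftS_iterate (n : ℕ) : Continuous (shiftS^[n]) := by
  induction n with
  | zero => exact continuous_id
  | succ n ih =>
    rw [Function.iterate_succ']
    exact continuous_shiftS.comp ih

lemma shiftS_iterate_apply (n : ℕ) (X : InfSub) : ∀ i, (shiftS^[n] X).1 i = X.1 (i + n) := by
  induction n with
  | zero => intro i; rfl
  | succ n ih =>
    intro i
    rw [Function.iterate_succ_apply']
    show (shiftS^[n] X).1 (i + 1) = X.1 (i + (n + 1))
    rw [ih (i + 1)]
    have he : i + 1 + n = i + (n + 1) := by omega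
    rw [he]

def embed (h : ℕ → ℕ) (hh : StrictMono h) (X : InfSub) : InfSub := ⟨h ∘ X.1, hh.comp X.2⟩

lemma continuous_embed (h : ℕ → ℕ) (hh : StrictMono h) : Continuous (embed h hh) :=
  Continuous.subtype_mk (continuous_pi fun i =>
    continuous_of_discreteTopology.comp ((continuous_apply i).comp continuous_subtype_val)) _

end GPaux

open GPaux in
/-- for an irreflexive relation `P` on ω, there is a continuous
homomorphism from `D_S` to `(ω, P)` iff there is a continuous homomorphism
from `D_S` to `D_S ↾ Unf(P)`. -/
theorem continuous_hom_iff_hom_to_unf (P : ℕ → ℕ → Prop) (hP : Irreflexive P) :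
    (∃ φ : InfSub → ℕ, Continuous φ ∧ ∀ X : InfSub, P (φ X) (φ (shiftS X))) ↔
    (∃ Φ : InfSub → InfSub, Continuous Φ ∧ (∀ X : InfSub, Φ X ∈ UnfRel P) ∧
      ∀ X Y : InfSub, shiftEdge X Y → shiftEdge (Φ X) (Φ Y)) := by
  constructor
  · rintro ⟨φ, hφc, hφP⟩
    have hne : ∀ Z : InfSub, φ Z ≠ φ (shiftS Z) := by
      intro Z h
      have hp := hφP Z
      rw [← h] at hp
      exact hP _ hp
    set c : InfSub → Bool := fun X => decide (φ X < φ (shiftS X)) with hcdef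
    have hc : ∀ X : InfSub, ∃ m, ∀ Y : InfSub, (∀ i, i < m → Y.1 i = X.1 i) → c Y = c X := by
      intro X
      obtain ⟨m1, hm1⟩ := continuous_modulus hφc X
      obtain ⟨m2, hm2⟩ := continuous_modulus (hφc.comp continuous_shiftS) X
      refine ⟨max m1 m2, fun Y hY => ?_⟩
      have h1 : φ Y = φ X := hm1 Y fun i hi => hY i (lt_of_lt_of_le hi (le_max_left _ _))
      have h2 : φ (shiftS Y) = φ (shiftS X) :=
        hm2 Y fun i hi => hY i (lt_of_lt_of_le hi (le_max_right _ _))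
      simp only [hcdef, h1, h2]
    obtain ⟨h, hmono, hdich⟩ := galvin c hc
    have hgood : ∀ X : InfSub, φ (embed h hmono X) < φ (shiftS (embed h hmono X)) := by
      have hrange : ∀ X : InfSub, ∀ i, (embed h hmono X).1 i ∈ Set.range h :=
        fun X i => ⟨X.1 i, rfl⟩
      rcases hdich with htrue | hfalse
      · intro X
        have := htrue (embed h hmono X) (hrange X)
        simpa [hcdef] using this
      · exfalso
        set E := embed h hmono ⟨id, strictMono_id⟩ with hE
        have hEr : ∀ n i, (shiftS^[n] E).1 i ∈ Set.range h := by
          intro n i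
          rw [shiftS_iterate_apply]
          exact ⟨i + n, rfl⟩
        apply no_descent (fun n => φ (shiftS^[n] E))
        intro n
        have hfn := hfalse (shiftS^[n] E) (hEr n)
        have hnlt : ¬ (φ (shiftS^[n] E) < φ (shiftS (shiftS^[n] E))) := by
          simpa [hcdef] using hfn
        have hle : φ (shiftS (shiftS^[n] E)) ≤ φ (shiftS^[n] E) := not_lt.mp hnlt
        have hne' := hne (shiftS^[n] E)
        rw [Function.iterate_succ_apply']
        exact lt_of_le_of_ne hle (fun e => hne' e.symm)
    set ψ : InfSub → ℕ := fun X => φ (embed h hmono X) with hψ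
    have hψc : Continuous ψ := hφc.comp (continuous_embed h hmono)
    have hcomm : ∀ X, embed h hmono (shiftS X) = shiftS (embed h hmono X) := fun X => rfl
    have hψlt : ∀ X, ψ X < ψ (shiftS X) := by
      intro X
      simp only [hψ]
      rw [hcomm X]
      exact hgood X
    have hψP : ∀ X, P (ψ X) (ψ (shiftS X)) := by
      intro X
      simp only [hψ]
      rw [hcomm X]
      exact hφP _
    have hΦmono : ∀ X : InfSub, StrictMono (fun n => ψ (shiftS^[n] X)) := by
      intro X
      apply strictMono_nat_of_lt_succ
      intro n
      rw [Function.iterate_succ_apply']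
      exact hψlt _
    refine ⟨fun X => ⟨fun n => ψ (shiftS^[n] X), hΦmono X⟩, ?_, ?_, ?_⟩
    · exact Continuous.subtype_mk
        (continuous_pi fun n => hψc.comp (continuous_shiftS_iterate n)) _
    · intro X i
      show P (ψ (shiftS^[i] X)) (ψ (shiftS^[i+1] X))
      rw [Function.iterate_succ_apply']
      exact hψP _
    · rintro X Y ⟨hXY, hS⟩
      constructor
      · intro heq
        have h0 : ψ X = ψ Y := congrArg (fun Z : InfSub => Z.1 0) heq
        have h1 : ψ Y = ψ (shiftS X) := by rw [← hS]
        exact absurd (h0.trans h1) (ne_of_lt (hψlt X))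
      · apply Subtype.ext
        funext n
        show ψ (shiftS^[n+1] X) = ψ (shiftS^[n] Y)
        rw [← hS, Function.iterate_succ_apply]
  · rintro ⟨Φ, hΦc, hΦU, hΦE⟩
    have hXS : ∀ X : InfSub, X ≠ shiftS X := by
      intro X h
      have h0 := congrArg (fun Z : InfSub => Z.1 0) h
      simp only [shiftS] at h0
      exact absurd h0 (ne_of_lt (X.2 Nat.zero_lt_one))
    refine ⟨fun X => (Φ X).1 0, ?_, ?_⟩
    · exact (continuous_apply 0).comp (continuous_subtype_val.comp hΦc)
    · intro X
      obtain ⟨hne', hSeq⟩ := hΦE X (shiftS X) ⟨hXS X, rfl⟩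
      have h1 : (Φ (shiftS X)).1 0 = (Φ X).1 1 := by rw [← hSeq]; rfl
      show P ((Φ X).1 0) ((Φ (shiftS X)).1 0)
      rw [h1]
      exact hΦU X 0
end
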